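/- Let C_{Γ(LS,2,1)} be the class of all Kripke models whose frame consists of exactly three worlds x, y, z with accessibility relation R = {(x,x),(y,y),(z,z),(y,z),(z,y),(x,y),(x,z)} (a root x below a two-element cluster {y,z}). Then C_{Γ(LS,2,1)} enjoys 2-IP. -/

import Mathlib

/-- Modal formulas over countably many variables. -/
inductive ModalForm : Type where
  | var : ℕ → ModalForm
  | bot : ModalForm
  | and : ModalForm → ModalForm → ModalForm
  | or : ModalForm → ModalForm → ModalForm
  | not : ModalForm → ModalForm
  | imp : ModalForm → ModalForm → ModalForm
  | box : ModalForm → ModalForm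

namespace ModalForm

mutual
  /-- positively occurring variables -/
  def vpos : ModalForm → Finset ℕ
    | var p => {p}
    | bot => ∅
    | and φ ψ => vpos φ ∪ vpos ψ
    | or φ ψ => vpos φ ∪ vpos ψ
    | not φ => vneg φ
    | imp φ ψ => vneg φ ∪ vpos ψ
    | box φ => vpos φ
  /-- negatively occurring variables -/
  def vneg : ModalForm → Finset ℕ
    | var _ => ∅
    | bot => ∅
    | and φ ψ => vneg φ ∪ vneg ψ
    | or φ ψ => vneg φ ∪ vneg ψ
    | not φ => vpos φ
    | imp φ ψ => vpos φ ∪ vneg ψ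
    | box φ => vneg φ
end

/-- Modal depth: maximal nesting of `□`. -/
def depth : ModalForm → ℕ
  | var _ => 0
  | bot => 0
  | and φ ψ => max (depth φ) (depth ψ)
  | or φ ψ => max (depth φ) (depth ψ)
  | not φ => depth φ
  | imp φ ψ => max (depth φ) (depth ψ)
  | box φ => depth φ + 1

/-- `◇φ := ¬□¬φ` -/
def dia (φ : ModalForm) : ModalForm := not (box (not φ))

/-- `⊤ := ¬⊥` -/
def top : ModalForm := not bot

end ModalForm

/-- An S4 Kripke frame: nonempty set of worlds with a reflexive transitive relation. -/
structure KFrame : Type 1 where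
  W : Type
  R : W → W → Prop
  nonempty : Nonempty W
  refl : ∀ x, R x x
  trans : ∀ x y z, R x y → R y z → R x z

/-- A Kripke model: a frame with a valuation. -/
structure KModel : Type 1 extends KFrame where
  val : W → ℕ → Prop

/-- The model based on frame `F` with valuation `V`. -/
def KFrame.toModel (F : KFrame) (V : F.W → ℕ → Prop) : KModel :=
  { toKFrame := F, val := V }

/-- Satisfaction in a Kripke model. -/
def KModel.Sat (M : KModel) : M.W → ModalForm → Prop
  | w, .var p => M.val w p
  | _, .bot => False
  | w, .and φ ψ => M.Sat w φ ∧ M.Sat w ψ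
  | w, .or φ ψ => M.Sat w φ ∨ M.Sat w ψ
  | w, .not φ => ¬ M.Sat w φ
  | w, .imp φ ψ => M.Sat w φ → M.Sat w ψ
  | w, .box φ => ∀ y, M.R w y → M.Sat y φ

/-- `(M0,w0) →ₙ^{(P⁺,P⁻)} (M1,w1)`: every `(P⁺,P⁻)`-formula of depth ≤ n
satisfied at `(M0,w0)` is satisfied at `(M1,w1)`. -/
def ModalArrow (Pp Pm : Finset ℕ) (n : ℕ) (M0 : KModel) (w0 : M0.W)
    (M1 : KModel) (w1 : M1.W) : Prop :=
  ∀ φ : ModalForm, φ.vpos ⊆ Pp → φ.vneg ⊆ Pm → φ.depth ≤ n →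
    M0.Sat w0 φ → M1.Sat w1 φ

/-- p-morphism between frames. -/
def PMorphism (F G : KFrame) (f : F.W → G.W) : Prop :=
  (∀ x y, F.R x y → G.R (f x) (f y)) ∧
  (∀ x w, G.R (f x) w → ∃ z, F.R x z ∧ f z = w)

/-- The class `C` of Kripke models enjoys `n`-IP. -/
def EnjoysIP (C : Set KModel) (n : ℕ) : Prop :=
  ∀ (Pp Pm : Finset ℕ) (M0 M1 : KModel), M0 ∈ C → M1 ∈ C →
    ∀ (w0 : M0.W) (w1 : M1.W), ModalArrow Pp Pm n M0 w0 M1 w1 →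
      ∃ (F : KFrame) (wstar : F.W) (f0 : F.W → M0.W) (f1 : F.W → M1.W),
        (∀ V : F.W → ℕ → Prop, F.toModel V ∈ C) ∧
        PMorphism F M0.toKFrame f0 ∧
        PMorphism F M1.toKFrame f1 ∧
        f0 wstar = w0 ∧ f1 wstar = w1 ∧
        ∀ x : F.W, ModalArrow Pp Pm 0 M0 (f0 x) M1 (f1 x)

/-- A world is final iff every successor is also a predecessor. -/
def KModel.Final (M : KModel) (w : M.W) : Prop := ∀ y, M.R w y → M.R y w

/-- The cluster of a world. -/
def KModel.cluster (M : KModel) (w : M.W) : Set M.W := {u | M.R w u ∧ M.R u w}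

/-- Cluster `C0` of `M0` matches cluster `C1` of `M1`. -/
def Matches (Pp Pm : Finset ℕ) (M0 M1 : KModel) (C0 : Set M0.W) (C1 : Set M1.W) : Prop :=
  (∀ u0 ∈ C0, ∃ u1 ∈ C1, ModalArrow Pp Pm 0 M0 u0 M1 u1) ∧
  (∀ u1 ∈ C1, ∃ u0 ∈ C0, ModalArrow Pp Pm 0 M0 u0 M1 u1)

/-- `φ` is satisfied at every world of every model in `C`. -/
def ValidOn (C : Set KModel) (φ : ModalForm) : Prop :=
  ∀ M ∈ C, ∀ w : M.W, M.Sat w φ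

/-- The class of Γ(LS,2,1) models: a root `x` below a two-element cluster `{y,z}`. -/
def C_LS21 : Set KModel :=
  {M | ∃ x y z : M.W, x ≠ y ∧ x ≠ z ∧ y ≠ z ∧
    (∀ w : M.W, w = x ∨ w = y ∨ w = z) ∧
    ∀ u v : M.W, M.R u v ↔
      (u = v ∨ (u = y ∧ v = z) ∨ (u = z ∧ v = y) ∨ (u = x ∧ v = y) ∨ (u = x ∧ v = z))}

namespace IPaux

open ModalForm

/-- conjunction of a list of formulas -/
def conj : List ModalForm → ModalForm
  | [] => .not .bot
  | φ :: l => .and φ (conj l)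

lemma sat_conj (M : KModel) (w : M.W) : ∀ l : List ModalForm,
    M.Sat w (conj l) ↔ ∀ φ ∈ l, M.Sat w φ
  | [] => by simp [conj, KModel.Sat]
  | φ :: l => by simp [conj, KModel.Sat, sat_conj M w l]

lemma vpos_conj {S : Finset ℕ} : ∀ l : List ModalForm,
    (∀ φ ∈ l, φ.vpos ⊆ S) → (conj l).vpos ⊆ S
  | [], _ => by simp [conj, vpos, vneg]
  | φ :: l, h => by
      simp only [conj, vpos]
      exact Finset.union_subset (h φ (by simp))
        (vpos_conj l fun ψ hψ => h ψ (List.mem_cons_of_mem _ hψ))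

lemma vneg_conj {S : Finset ℕ} : ∀ l : List ModalForm,
    (∀ φ ∈ l, φ.vneg ⊆ S) → (conj l).vneg ⊆ S
  | [], _ => by simp [conj, vpos, vneg]
  | φ :: l, h => by
      simp only [conj, vneg]
      exact Finset.union_subset (h φ (by simp))
        (vneg_conj l fun ψ hψ => h ψ (List.mem_cons_of_mem _ hψ))

lemma depth_conj : ∀ l : List ModalForm,
    (∀ φ ∈ l, φ.depth = 0) → (conj l).depth = 0
  | [], _ => by simp [conj, depth]
  | φ :: l, h => by
      simp only [conj, depth, Nat.max_eq_zero_iff]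
      exact ⟨h φ (by simp), depth_conj l fun ψ hψ => h ψ (List.mem_cons_of_mem _ hψ)⟩

open Classical in
/-- depth-0 characteristic formula of world `u` of `M` relative to `(Pp, Pm)`. -/
noncomputable def delta (Pp Pm : Finset ℕ) (M : KModel) (u : M.W) : ModalForm :=
  conj ((Pp.filter (fun p => M.val u p)).toList.map .var
      ++ (Pm.filter (fun p => ¬ M.val u p)).toList.map (fun p => .not (.var p)))

open Classical in
lemma sat_delta {Pp Pm : Finset ℕ} {M : KModel} {u : M.W} (N : KModel) (v : N.W) :
    N.Sat v (delta Pp Pm M u) ↔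
      (∀ p ∈ Pp, M.val u p → N.val v p) ∧ (∀ p ∈ Pm, ¬ M.val u p → ¬ N.val v p) := by
  classical
  rw [delta, sat_conj]
  constructor
  · intro h
    constructor
    · intro p hp hup
      have := h (.var p) (by
        apply List.mem_append_left
        simp only [List.mem_map, Finset.mem_toList, Finset.mem_filter]
        exact ⟨p, ⟨hp, hup⟩, rfl⟩)
      simpa [KModel.Sat] using this
    · intro p hp hup
      have := h (.not (.var p)) (by
        apply List.mem_append_right
        simp only [List.mem_map, Finset.mem_toList, Finset.mem_filter]
        exact ⟨p, ⟨hp, hup⟩, rfl⟩)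
      simpa [KModel.Sat] using this
  · rintro ⟨h1, h2⟩ φ hφ
    rcases List.mem_append.mp hφ with hm | hm
    · obtain ⟨p, hp, rfl⟩ := List.mem_map.mp hm
      rw [Finset.mem_toList, Finset.mem_filter] at hp
      show N.val v p
      exact h1 p hp.1 hp.2
    · obtain ⟨p, hp, rfl⟩ := List.mem_map.mp hm
      rw [Finset.mem_toList, Finset.mem_filter] at hp
      show ¬ N.val v p
      exact h2 p hp.1 hp.2

lemma sat_delta_self {Pp Pm : Finset ℕ} {M : KModel} (u : M.W) :
    M.Sat u (delta Pp Pm M u) :=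
  (sat_delta M u).mpr ⟨fun _ _ h => h, fun _ _ h => h⟩

lemma delta_vpos {Pp Pm : Finset ℕ} {M : KModel} {u : M.W} :
    (delta Pp Pm M u).vpos ⊆ Pp := by
  classical
  rw [delta]
  apply vpos_conj
  intro φ hφ
  rcases List.mem_append.mp hφ with hm | hm <;>
    obtain ⟨p, hp, rfl⟩ := List.mem_map.mp hm <;>
    rw [Finset.mem_toList, Finset.mem_filter] at hp <;>
    simp [vpos, vneg, Finset.singleton_subset_iff, hp.1]

lemma delta_vneg {Pp Pm : Finset ℕ} {M : KModel} {u : M.W} :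
    (delta Pp Pm M u).vneg ⊆ Pm := by
  classical
  rw [delta]
  apply vneg_conj
  intro φ hφ
  rcases List.mem_append.mp hφ with hm | hm <;>
    obtain ⟨p, hp, rfl⟩ := List.mem_map.mp hm <;>
    rw [Finset.mem_toList, Finset.mem_filter] at hp <;>
    simp [vpos, vneg, Finset.singleton_subset_iff, hp.1]

lemma delta_depth {Pp Pm : Finset ℕ} {M : KModel} {u : M.W} :
    (delta Pp Pm M u).depth = 0 := by
  classical
  rw [delta]
  apply depth_conj
  intro φ hφ
  rcases List.mem_append.mp hφ with hm | hm <;>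
    obtain ⟨p, hp, rfl⟩ := List.mem_map.mp hm <;> simp [depth]

/-- transfer of depth-0 formulas from atomic conditions -/
lemma sat_transfer {Pp Pm : Finset ℕ} {M0 M1 : KModel} {u : M0.W} {v : M1.W}
    (h1 : ∀ p ∈ Pp, M0.val u p → M1.val v p)
    (h2 : ∀ p ∈ Pm, M1.val v p → M0.val u p) :
    ∀ φ : ModalForm, φ.depth = 0 →
      ((φ.vpos ⊆ Pp → φ.vneg ⊆ Pm → M0.Sat u φ → M1.Sat v φ) ∧
       (φ.vpos ⊆ Pm → φ.vneg ⊆ Pp → M1.Sat v φ → M0.Sat u φ)) := by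
  intro φ
  induction φ with
  | var p =>
      intro _
      constructor
      · intro hp _ hs
        exact h1 p (hp (Finset.mem_singleton_self p)) hs
      · intro hp _ hs
        exact h2 p (hp (Finset.mem_singleton_self p)) hs
  | bot => intro _; exact ⟨fun _ _ h => h.elim, fun _ _ h => h.elim⟩
  | and φ ψ ihφ ihψ =>
      intro hd
      rw [depth, Nat.max_eq_zero_iff] at hd
      have hφ := ihφ hd.1; have hψ := ihψ hd.2
      simp only [vpos, vneg, Finset.union_subset_iff, KModel.Sat]
      exact ⟨fun hp hm hs => ⟨hφ.1 hp.1 hm.1 hs.1, hψ.1 hp.2 hm.2 hs.2⟩,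
             fun hp hm hs => ⟨hφ.2 hp.1 hm.1 hs.1, hψ.2 hp.2 hm.2 hs.2⟩⟩
  | or φ ψ ihφ ihψ =>
      intro hd
      rw [depth, Nat.max_eq_zero_iff] at hd
      have hφ := ihφ hd.1; have hψ := ihψ hd.2
      simp only [vpos, vneg, Finset.union_subset_iff, KModel.Sat]
      exact ⟨fun hp hm hs => hs.imp (hφ.1 hp.1 hm.1) (hψ.1 hp.2 hm.2),
             fun hp hm hs => hs.imp (hφ.2 hp.1 hm.1) (hψ.2 hp.2 hm.2)⟩
  | not φ ihφ =>
      intro hd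
      rw [depth] at hd
      have hφ := ihφ hd
      simp only [vpos, vneg, KModel.Sat]
      exact ⟨fun hp hm hs hv => hs (hφ.2 hm hp hv),
             fun hp hm hs hv => hs (hφ.1 hm hp hv)⟩
  | imp φ ψ ihφ ihψ =>
      intro hd
      rw [depth, Nat.max_eq_zero_iff] at hd
      have hφ := ihφ hd.1; have hψ := ihψ hd.2
      simp only [vpos, vneg, Finset.union_subset_iff, KModel.Sat]
      exact ⟨fun hp hm hs hv => hψ.1 hp.2 hm.2 (hs (hφ.2 hm.1 hp.1 hv)),
             fun hp hm hs hv => hψ.2 hp.2 hm.2 (hs (hφ.1 hm.1 hp.1 hv))⟩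
  | box φ _ =>
      intro hd
      rw [depth] at hd
      omega

lemma arrow0_of_sat_delta {Pp Pm : Finset ℕ} {M0 M1 : KModel} {u : M0.W} {v : M1.W}
    (h : M1.Sat v (delta Pp Pm M0 u)) : ModalArrow Pp Pm 0 M0 u M1 v := by
  rw [sat_delta] at h
  intro φ hp hm hd hs
  exact (sat_transfer h.1
    (fun p hp hv => by
      by_contra hu
      exact h.2 p hp hu hv)
    φ (Nat.le_zero.mp hd)).1 hp hm hs

/-- the 3-world frame: root 0 below the cluster {1, 2} -/
def F3 : KFrame where
  W := Fin 3
  R a b := b = 0 → a = 0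
  nonempty := ⟨0⟩
  refl := fun _ h => h
  trans := fun _ _ _ h1 h2 h => h1 (h2 h)

lemma F3_mem (V : Fin 3 → ℕ → Prop) : F3.toModel V ∈ C_LS21 := by
  have h1 : (0 : Fin 3) ≠ 1 := by decide
  have h2 : (0 : Fin 3) ≠ 2 := by decide
  have h3 : (1 : Fin 3) ≠ 2 := by decide
  have htot : ∀ w : Fin 3, w = 0 ∨ w = 1 ∨ w = 2 := by decide
  have hiff : ∀ u v : Fin 3, ((v = 0 → u = 0) ↔
      (u = v ∨ (u = 1 ∧ v = 2) ∨ (u = 2 ∧ v = 1) ∨ (u = 0 ∧ v = 1) ∨ (u = 0 ∧ v = 2))) := by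
    decide
  exact ⟨(0 : Fin 3), (1 : Fin 3), (2 : Fin 3), h1, h2, h3, htot, hiff⟩

section Frame

variable {M : KModel} {x y z : M.W}

/-- everyone sees the cluster element `y` -/
lemma sees_y
    (htot : ∀ w : M.W, w = x ∨ w = y ∨ w = z)
    (hR : ∀ u v : M.W, M.R u v ↔
      (u = v ∨ (u = y ∧ v = z) ∨ (u = z ∧ v = y) ∨ (u = x ∧ v = y) ∨ (u = x ∧ v = z)))
    (u : M.W) : M.R u y := by
  rcases htot u with rfl | rfl | rfl <;> rw [hR] <;> tauto

/-- successors of `y` lie in the cluster -/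
lemma succ_y
    (hR : ∀ u v : M.W, M.R u v ↔
      (u = v ∨ (u = y ∧ v = z) ∨ (u = z ∧ v = y) ∨ (u = x ∧ v = y) ∨ (u = x ∧ v = z)))
    {v : M.W} (h : M.R y v) : v = y ∨ v = z := by
  rw [hR] at h
  rcases h with rfl | ⟨-, rfl⟩ | ⟨-, rfl⟩ | ⟨-, rfl⟩ | ⟨-, rfl⟩
  · left; rfl
  · right; rfl
  · left; rfl
  · left; rfl
  · right; rfl

/-- only the root sees the root -/
lemma to_root (hxy : x ≠ y) (hxz : x ≠ z)
    (hR : ∀ u v : M.W, M.R u v ↔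
      (u = v ∨ (u = y ∧ v = z) ∨ (u = z ∧ v = y) ∨ (u = x ∧ v = y) ∨ (u = x ∧ v = z)))
    {u : M.W} (h : M.R u x) : u = x := by
  rw [hR] at h
  rcases h with rfl | ⟨rfl, h⟩ | ⟨rfl, h⟩ | ⟨rfl, h⟩ | ⟨rfl, h⟩
  · rfl
  · exact absurd h hxz
  · exact absurd h hxy
  · rfl
  · rfl

/-- swap the roles of the two cluster elements -/
lemma hR_swap
    (hR : ∀ u v : M.W, M.R u v ↔
      (u = v ∨ (u = y ∧ v = z) ∨ (u = z ∧ v = y) ∨ (u = x ∧ v = y) ∨ (u = x ∧ v = z))) :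
    ∀ u v : M.W, M.R u v ↔
      (u = v ∨ (u = z ∧ v = y) ∨ (u = y ∧ v = z) ∨ (u = x ∧ v = z) ∨ (u = x ∧ v = y)) :=
  fun u v => (hR u v).trans (by tauto)

lemma htot_swap (htot : ∀ w : M.W, w = x ∨ w = y ∨ w = z) :
    ∀ w : M.W, w = x ∨ w = z ∨ w = y := fun w => by rcases htot w with h|h|h <;> tauto

/-- the generic p-morphism from F3 -/
lemma pmorph (hxy : x ≠ y) (hxz : x ≠ z)
    (htot : ∀ w : M.W, w = x ∨ w = y ∨ w = z)
    (hR : ∀ u v : M.W, M.R u v ↔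
      (u = v ∨ (u = y ∧ v = z) ∨ (u = z ∧ v = y) ∨ (u = x ∧ v = y) ∨ (u = x ∧ v = z)))
    (r : M.W) : PMorphism F3 M.toKFrame ![r, y, z] := by
  have fin3 : ∀ a : Fin 3, a = 0 ∨ a = 1 ∨ a = 2 := by decide
  have hRyz : M.R y z := (hR y z).mpr (by tauto)
  have hRzy : M.R z y := (hR z y).mpr (by tauto)
  constructor
  · intro a b hab
    rcases fin3 a with rfl | rfl | rfl <;> rcases fin3 b with rfl | rfl | rfl
    · exact M.refl r
    · exact sees_y htot hR r
    · exact sees_y (htot_swap htot) (hR_swap hR) r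
    · exact absurd (hab rfl) (by decide)
    · exact M.refl y
    · exact hRyz
    · exact absurd (hab rfl) (by decide)
    · exact hRzy
    · exact M.refl z
  · intro a w hw
    rcases fin3 a with rfl | rfl | rfl
    · rcases htot w with rfl | rfl | rfl
      · exact ⟨(0 : Fin 3), fun _ => rfl, to_root hxy hxz hR hw⟩
      · exact ⟨(1 : Fin 3), fun _ => rfl, rfl⟩
      · exact ⟨(2 : Fin 3), fun _ => rfl, rfl⟩
    · rcases succ_y hR (show M.R y w from hw) with rfl | rfl
      · exact ⟨(1 : Fin 3), fun h => h, rfl⟩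
      · exact ⟨(2 : Fin 3), fun h => absurd h (by decide), rfl⟩
    · rcases succ_y (hR_swap hR) (show M.R z w from hw) with rfl | rfl
      · exact ⟨(2 : Fin 3), fun h => h, rfl⟩
      · exact ⟨(1 : Fin 3), fun h => absurd h (by decide), rfl⟩

end Frame

end IPaux

open IPaux
theorem stmt10 : EnjoysIP C_LS21 2 := by
  intro Pp Pm M0 M1 hM0 hM1 w0 w1 harr
  obtain ⟨x0, y0, z0, hxy0, hxz0, hyz0, htot0, hR0⟩ := hM0
  obtain ⟨x1, y1, z1, hxy1, hxz1, hyz1, htot1, hR1⟩ := hM1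
  -- row facts: each M0-cluster element matches some M1-cluster element
  have row : ∀ u0 : M0.W, (∀ a, M0.R a u0) →
      M1.Sat y1 (delta Pp Pm M0 u0) ∨ M1.Sat z1 (delta Pp Pm M0 u0) := by
    intro u0 hsees
    have hrow : M0.Sat w0 (.box (ModalForm.dia (delta Pp Pm M0 u0))) := by
      intro a _ hall
      exact hall u0 (hsees a) (sat_delta_self u0)
    have htrans : M1.Sat w1 (.box (ModalForm.dia (delta Pp Pm M0 u0))) := by
      apply harr _ ?_ ?_ ?_ hrow
      · simp only [ModalForm.vpos, ModalForm.vneg, ModalForm.dia]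
        exact delta_vpos
      · simp only [ModalForm.vpos, ModalForm.vneg, ModalForm.dia]
        exact delta_vneg
      · simp [ModalForm.depth, ModalForm.dia, delta_depth]
    have hy1 : ¬ ∀ b, M1.R y1 b → ¬ M1.Sat b (delta Pp Pm M0 u0) :=
      htrans y1 (sees_y htot1 hR1 w1)
    push_neg at hy1
    obtain ⟨b, hb, hsat⟩ := hy1
    rcases succ_y hR1 hb with rfl | rfl
    · exact Or.inl hsat
    · exact Or.inr hsat
  -- column facts: each M1-cluster element matches some M0-cluster element
  have col : ∀ v1 : M1.W, (∀ a, M1.R a v1) →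
      M1.Sat v1 (delta Pp Pm M0 y0) ∨ M1.Sat v1 (delta Pp Pm M0 z0) := by
    intro v1 hsees
    have hcol : M0.Sat w0 (ModalForm.dia (.box (.or (delta Pp Pm M0 y0) (delta Pp Pm M0 z0)))) := by
      intro hall
      apply hall y0 (sees_y htot0 hR0 w0)
      intro b hb
      rcases succ_y hR0 hb with rfl | rfl
      · exact Or.inl (sat_delta_self b)
      · exact Or.inr (sat_delta_self b)
    have htrans : M1.Sat w1 (ModalForm.dia (.box (.or (delta Pp Pm M0 y0) (delta Pp Pm M0 z0)))) := by
      apply harr _ ?_ ?_ ?_ hcol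
      · simp only [ModalForm.vpos, ModalForm.vneg, ModalForm.dia]
        exact Finset.union_subset delta_vpos delta_vpos
      · simp only [ModalForm.vpos, ModalForm.vneg, ModalForm.dia]
        exact Finset.union_subset delta_vneg delta_vneg
      · simp [ModalForm.depth, ModalForm.dia, delta_depth]
    have h' : ¬ ∀ a, M1.R w1 a →
        ¬ (∀ b, M1.R a b → M1.Sat b (.or (delta Pp Pm M0 y0) (delta Pp Pm M0 z0))) := htrans
    push_neg at h'
    obtain ⟨a, ha, hsat⟩ := h'
    exact hsat v1 (hsees a)
  have row_y := row y0 (sees_y htot0 hR0)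
  have row_z := row z0 (sees_y (htot_swap htot0) (hR_swap hR0))
  have col_y := col y1 (sees_y htot1 hR1)
  have col_z := col z1 (sees_y (htot_swap htot1) (hR_swap hR1))
  have harr0 : ModalArrow Pp Pm 0 M0 w0 M1 w1 :=
    fun φ hp hm hd hs => harr φ hp hm (hd.trans (by norm_num)) hs
  -- there is a perfect matching
  have matching :
      (M1.Sat y1 (delta Pp Pm M0 y0) ∧ M1.Sat z1 (delta Pp Pm M0 z0)) ∨
      (M1.Sat y1 (delta Pp Pm M0 z0) ∧ M1.Sat z1 (delta Pp Pm M0 y0)) := by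
    tauto
  have fin3 : ∀ a : Fin 3, a = 0 ∨ a = 1 ∨ a = 2 := by decide
  rcases matching with ⟨hA, hB⟩ | ⟨hA, hB⟩
  · refine ⟨F3, (0 : Fin 3), ![w0, y0, z0], ![w1, y1, z1], F3_mem,
      pmorph hxy0 hxz0 htot0 hR0 w0, pmorph hxy1 hxz1 htot1 hR1 w1, rfl, rfl, ?_⟩
    intro a
    rcases fin3 a with rfl | rfl | rfl
    · exact harr0
    · exact arrow0_of_sat_delta hA
    · exact arrow0_of_sat_delta hB
  · refine ⟨F3, (0 : Fin 3), ![w0, y0, z0], ![w1, z1, y1], F3_mem,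
      pmorph hxy0 hxz0 htot0 hR0 w0,
      pmorph hxz1 hxy1 (htot_swap htot1) (hR_swap hR1) w1, rfl, rfl, ?_⟩
    intro a
    rcases fin3 a with rfl | rfl | rfl
    · exact harr0
    · exact arrow0_of_sat_delta hB
    · exact arrow0_of_sat_delta hA
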